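/- For matrices X, Y, ΔX, ΔY ∈ ℝ^{n×r}: ‖ΔX Yᵀ + X ΔYᵀ‖_F² ≤ (‖X‖² + ‖Y‖²)(‖ΔX‖_F² + ‖ΔY‖_F²), where ‖·‖ is the spectral norm. -/

import Mathlib

open Matrix

/-- Spectral norm (operator 2-norm) of a real matrix. -/
noncomputable def specNorm {m n : Type*} [Fintype m] [Fintype n] [DecidableEq n]
    (A : Matrix m n ℝ) : ℝ :=
  ‖LinearMap.toContinuousLinearMap (Matrix.toEuclideanLin A)‖

/-- Frobenius norm of a real matrix. -/
noncomputable def frobNorm {m n : Type*} [Fintype m] [Fintype n] (A : Matrix m n ℝ) : ℝ :=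
  Real.sqrt (∑ i, ∑ j, (A i j) ^ 2)

lemma specNorm_nonneg {m n : Type*} [Fintype m] [Fintype n] [DecidableEq n]
    (A : Matrix m n ℝ) : 0 ≤ specNorm A := norm_nonneg _

lemma frobNorm_nonneg {m n : Type*} [Fintype m] [Fintype n] (A : Matrix m n ℝ) :
    0 ≤ frobNorm A := Real.sqrt_nonneg _

lemma frobNorm_sq {m n : Type*} [Fintype m] [Fintype n] (A : Matrix m n ℝ) :
    frobNorm A ^ 2 = ∑ i, ∑ j, (A i j) ^ 2 := by
  rw [frobNorm, Real.sq_sqrt]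
  positivity

attribute [local instance] Matrix.frobeniusNormedAddCommGroup

lemma frobNorm_eq_norm {m n : Type*} [Fintype m] [Fintype n] (A : Matrix m n ℝ) :
    frobNorm A = ‖A‖ := by
  rw [frobNorm, Matrix.frobenius_norm_def, Real.sqrt_eq_rpow]
  congr 1
  refine Finset.sum_congr rfl fun i _ => Finset.sum_congr rfl fun j _ => ?_
  rw [Real.rpow_two, Real.norm_eq_abs, sq_abs]

lemma mulVec_sq_bound {m n : Type*} [Fintype m] [Fintype n] [DecidableEq n]
    (A : Matrix m n ℝ) (u : n → ℝ) :
    ∑ i, (A.mulVec u i) ^ 2 ≤ specNorm A ^ 2 * ∑ j, (u j) ^ 2 := by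
  have h := (LinearMap.toContinuousLinearMap (Matrix.toEuclideanLin A)).le_opNorm
    ((WithLp.equiv 2 (n → ℝ)).symm u)
  have heq : (LinearMap.toContinuousLinearMap (Matrix.toEuclideanLin A))
      ((WithLp.equiv 2 (n → ℝ)).symm u) = (WithLp.equiv 2 (m → ℝ)).symm (A.mulVec u) := rfl
  have hn1 : ‖(WithLp.equiv 2 (m → ℝ)).symm (A.mulVec u)‖ =
      Real.sqrt (∑ i, (A.mulVec u i) ^ 2) := by
    rw [EuclideanSpace.norm_eq]
    congr 1
    refine Finset.sum_congr rfl fun i _ => ?_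
    rw [WithLp.equiv_symm_apply, PiLp.toLp_apply, Real.norm_eq_abs, sq_abs]
  have hn2 : ‖(WithLp.equiv 2 (n → ℝ)).symm u‖ = Real.sqrt (∑ j, (u j) ^ 2) := by
    rw [EuclideanSpace.norm_eq]
    congr 1
    refine Finset.sum_congr rfl fun j _ => ?_
    rw [WithLp.equiv_symm_apply, PiLp.toLp_apply, Real.norm_eq_abs, sq_abs]
  rw [heq, hn1, hn2] at h
  have h2 : Real.sqrt (∑ i, (A.mulVec u i) ^ 2) ^ 2 ≤
      (specNorm A * Real.sqrt (∑ j, (u j) ^ 2)) ^ 2 := by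
    apply pow_le_pow_left₀ (Real.sqrt_nonneg _) h
  rw [Real.sq_sqrt (by positivity), mul_pow, Real.sq_sqrt (by positivity)] at h2
  exact h2

lemma frob_mul_transpose_bound {n r : ℕ} (A B : Matrix (Fin n) (Fin r) ℝ) :
    frobNorm (A * Bᵀ) ^ 2 ≤ specNorm B ^ 2 * frobNorm A ^ 2 := by
  rw [frobNorm_sq, frobNorm_sq, Finset.mul_sum]
  refine Finset.sum_le_sum fun i _ => ?_
  have : ∀ j, (A * Bᵀ) i j = B.mulVec (A i) j := by
    intro j
    simp [Matrix.mul_apply, Matrix.mulVec, dotProduct, mul_comm]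
  simp_rw [this]
  exact mulVec_sq_bound B (A i)

/-- ‖ΔX Yᵀ + X ΔYᵀ‖_F² ≤ (‖X‖² + ‖Y‖²)(‖ΔX‖_F² + ‖ΔY‖_F²). -/
theorem frob_cross_term_bound (n r : ℕ) (X Y ΔX ΔY : Matrix (Fin n) (Fin r) ℝ) :
    frobNorm (ΔX * Yᵀ + X * ΔYᵀ) ^ 2 ≤
      (specNorm X ^ 2 + specNorm Y ^ 2) * (frobNorm ΔX ^ 2 + frobNorm ΔY ^ 2) := by
  have htri : frobNorm (ΔX * Yᵀ + X * ΔYᵀ) ≤ frobNorm (ΔX * Yᵀ) + frobNorm (X * ΔYᵀ) := by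
    rw [frobNorm_eq_norm, frobNorm_eq_norm, frobNorm_eq_norm]
    exact norm_add_le _ _
  have h1 : frobNorm (ΔX * Yᵀ) ^ 2 ≤ specNorm Y ^ 2 * frobNorm ΔX ^ 2 :=
    frob_mul_transpose_bound ΔX Y
  have hXt : frobNorm (X * ΔYᵀ) = frobNorm (ΔY * Xᵀ) := by
    unfold frobNorm
    congr 1
    rw [Finset.sum_comm]
    simp_rw [Matrix.mul_apply, Matrix.transpose_apply, mul_comm]
  have h2 : frobNorm (X * ΔYᵀ) ^ 2 ≤ specNorm X ^ 2 * frobNorm ΔY ^ 2 := by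
    rw [hXt]; exact frob_mul_transpose_bound ΔY X
  have h1' : frobNorm (ΔX * Yᵀ) ≤ specNorm Y * frobNorm ΔX := by
    nlinarith [h1, frobNorm_nonneg (ΔX * Yᵀ), specNorm_nonneg Y, frobNorm_nonneg ΔX,
      mul_nonneg (specNorm_nonneg Y) (frobNorm_nonneg ΔX)]
  have h2' : frobNorm (X * ΔYᵀ) ≤ specNorm X * frobNorm ΔY := by
    nlinarith [h2, frobNorm_nonneg (X * ΔYᵀ), specNorm_nonneg X, frobNorm_nonneg ΔY,
      mul_nonneg (specNorm_nonneg X) (frobNorm_nonneg ΔY)]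
  have key : frobNorm (ΔX * Yᵀ + X * ΔYᵀ) ≤
      specNorm Y * frobNorm ΔX + specNorm X * frobNorm ΔY :=
    htri.trans (add_le_add h1' h2')
  have hsq : frobNorm (ΔX * Yᵀ + X * ΔYᵀ) ^ 2 ≤
      (specNorm Y * frobNorm ΔX + specNorm X * frobNorm ΔY) ^ 2 :=
    pow_le_pow_left₀ (frobNorm_nonneg _) key 2
  nlinarith [sq_nonneg (specNorm Y * frobNorm ΔY - specNorm X * frobNorm ΔX)]
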